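/- The Gaussian curvature of the two-dimensional Riemannian metric ds² = μ [dλ²/(a₀+a₁λ−c₀λ²) ] + dμ²/(4μ(c₃μ³+c₂μ²+c₁μ+c₀)) equals κ = −(3c₃μ² + 2c₂μ + c₁); in particular, κ is constant if and only if c₃ = c₂ = 0, and κ = 0 if and only if c₃ = c₂ = c₁ = 0. -/

import Mathlib

noncomputable def pd1 (f : ℝ → ℝ → ℝ) (l m : ℝ) : ℝ := deriv (fun x => f x m) l
noncomputable def pd2 (f : ℝ → ℝ → ℝ) (l m : ℝ) : ℝ := deriv (fun y => f l y) m

/-- Gaussian curvature of the orthogonal metric `E dλ² + G dμ²`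
(Brioschi formula with `F = 0`):
`κ = -1/(2√(EG)) [ ∂_λ (G_λ/√(EG)) + ∂_μ (E_μ/√(EG)) ]`. -/
noncomputable def gaussCurv (E G : ℝ → ℝ → ℝ) (l m : ℝ) : ℝ :=
  -(1 / (2 * Real.sqrt (E l m * G l m))) *
    (deriv (fun a => pd1 G a m / Real.sqrt (E a m * G a m)) l +
     deriv (fun b => pd2 E l b / Real.sqrt (E l b * G l b)) m)

lemma gauss_aux (a₀ a₁ c₀ c₁ c₂ c₃ l m : ℝ) (hm : 0 < m)
    (hQ : 0 < a₀ + a₁ * l - c₀ * l ^ 2)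
    (hPm : 0 < c₃ * m ^ 3 + c₂ * m ^ 2 + c₁ * m + c₀) :
    gaussCurv
        (fun l m => m / (a₀ + a₁ * l - c₀ * l ^ 2))
        (fun _ m => 1 / (4 * m * (c₃ * m ^ 3 + c₂ * m ^ 2 + c₁ * m + c₀)))
        l m
      = -(3 * c₃ * m ^ 2 + 2 * c₂ * m + c₁) := by
  set Q : ℝ := a₀ + a₁ * l - c₀ * l ^ 2 with hQdef
  set P : ℝ → ℝ := fun b => c₃ * b ^ 3 + c₂ * b ^ 2 + c₁ * b + c₀ with hPdef
  have hPfold : ∀ b : ℝ, c₃ * b ^ 3 + c₂ * b ^ 2 + c₁ * b + c₀ = P b := fun _ => rfl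
  -- sqrt of E*G on the good region
  have key : ∀ b : ℝ, 0 < b → 0 < P b →
      Real.sqrt (b / Q * (1 / (4 * b * P b))) = 1 / (2 * Real.sqrt Q * Real.sqrt (P b)) := by
    intro b hb hPb
    have h1 : b / Q * (1 / (4 * b * P b)) = (1 / (2 * Real.sqrt Q * Real.sqrt (P b))) ^ 2 := by
      rw [div_pow, one_pow, mul_pow, mul_pow, Real.sq_sqrt hQ.le, Real.sq_sqrt hPb.le]
      field_simp; ring
    rw [h1, Real.sqrt_sq (by positivity)]
  -- the first derivative term vanishes
  have h1 : deriv (fun a => pd1 (fun _ m => 1 / (4 * m * P m)) a m /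
      Real.sqrt ((fun l m => m / (a₀ + a₁ * l - c₀ * l ^ 2)) a m *
        (fun _ m => 1 / (4 * m * P m)) a m)) l = 0 := by
    have : (fun a => pd1 (fun _ m => 1 / (4 * m * P m)) a m /
        Real.sqrt ((fun l m => m / (a₀ + a₁ * l - c₀ * l ^ 2)) a m *
          (fun _ m => 1 / (4 * m * P m)) a m)) = fun _ => (0:ℝ) := by
      funext a; simp [pd1]
    rw [this, deriv_const]
  -- partial derivative of E in μ
  have hpd2 : ∀ b : ℝ, pd2 (fun l m => m / (a₀ + a₁ * l - c₀ * l ^ 2)) l b = 1 / Q := by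
    intro b
    simp only [pd2]
    rw [deriv_div_const, deriv_id'']
  -- the function in the second derivative term agrees with a nice one near m
  have hev : (fun b => pd2 (fun l m => m / (a₀ + a₁ * l - c₀ * l ^ 2)) l b /
      Real.sqrt ((fun l m => m / (a₀ + a₁ * l - c₀ * l ^ 2)) l b *
        (fun _ m => 1 / (4 * m * P m)) l b))
      =ᶠ[nhds m] (fun b => (2 / Real.sqrt Q) * Real.sqrt (P b)) := by
    have hmem : ∀ᶠ b in nhds m, 0 < b ∧ 0 < P b := by
      have hopen : {b : ℝ | 0 < P b} ∈ nhds m :=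
        (isOpen_lt continuous_const (by fun_prop)).mem_nhds hPm
      exact (eventually_gt_nhds hm).and hopen
    filter_upwards [hmem] with b hb
    rw [key b hb.1 hb.2, hpd2 b]
    have hsQ : (0:ℝ) < Real.sqrt Q := Real.sqrt_pos.mpr hQ
    have hsP : (0:ℝ) < Real.sqrt (P b) := Real.sqrt_pos.mpr hb.2
    rw [div_div_eq_mul_div, div_one]
    field_simp
    nlinarith [Real.mul_self_sqrt hQ.le]
  -- derivative of the nice function
  have hP' : HasDerivAt P (3 * c₃ * m ^ 2 + 2 * c₂ * m + c₁) m := by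
    have h := (((hasDerivAt_pow 3 m).const_mul c₃).add
        ((hasDerivAt_pow 2 m).const_mul c₂)).add
        (((hasDerivAt_id' m).const_mul c₁).add (hasDerivAt_const m c₀))
    convert h using 1
    · rfl
    · rfl
    · funext x; simp only [Pi.add_apply, hPdef]; ring
    · push_cast; ring
  have hsqrtP : HasDerivAt (fun b => (2 / Real.sqrt Q) * Real.sqrt (P b))
      ((2 / Real.sqrt Q) * (1 / (2 * Real.sqrt (P m)) *
        (3 * c₃ * m ^ 2 + 2 * c₂ * m + c₁))) m := by
    have h := ((Real.hasDerivAt_sqrt hPm.ne').comp m hP').const_mul (2 / Real.sqrt Q)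
    simpa [Function.comp] using h
  have hderiv : deriv (fun b => pd2 (fun l m => m / (a₀ + a₁ * l - c₀ * l ^ 2)) l b /
      Real.sqrt ((fun l m => m / (a₀ + a₁ * l - c₀ * l ^ 2)) l b *
        (fun _ m => 1 / (4 * m * P m)) l b)) m
      = (2 / Real.sqrt Q) * (1 / (2 * Real.sqrt (P m)) *
        (3 * c₃ * m ^ 2 + 2 * c₂ * m + c₁)) := by
    rw [hev.deriv_eq, hsqrtP.deriv]
  -- assemble
  simp only [gaussCurv, hPfold]
  rw [h1, hderiv]
  show -(1 / (2 * Real.sqrt (m / Q * (1 / (4 * m * P m))))) * _ = _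
  rw [key m hm hPm]
  have hsQ : (0:ℝ) < Real.sqrt Q := Real.sqrt_pos.mpr hQ
  have hsP : (0:ℝ) < Real.sqrt (P m) := Real.sqrt_pos.mpr hPm
  field_simp
  ring

theorem gauss_curvature_of_second_type_metric
    (a₀ a₁ c₀ c₁ c₂ c₃ : ℝ) (U : Set (ℝ × ℝ)) (hU : IsOpen U)
    (hpos : ∀ p ∈ U, 0 < p.2 ∧ 0 < a₀ + a₁ * p.1 - c₀ * p.1 ^ 2 ∧
      0 < c₃ * p.2 ^ 3 + c₂ * p.2 ^ 2 + c₁ * p.2 + c₀) :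
    (∀ p ∈ U, gaussCurv
        (fun l m => m / (a₀ + a₁ * l - c₀ * l ^ 2))
        (fun _ m => 1 / (4 * m * (c₃ * m ^ 3 + c₂ * m ^ 2 + c₁ * m + c₀)))
        p.1 p.2
      = -(3 * c₃ * p.2 ^ 2 + 2 * c₂ * p.2 + c₁)) ∧
    ((∃ κ₀ : ℝ, ∀ m : ℝ, -(3 * c₃ * m ^ 2 + 2 * c₂ * m + c₁) = κ₀) ↔
      (c₃ = 0 ∧ c₂ = 0)) ∧
    ((∀ m : ℝ, -(3 * c₃ * m ^ 2 + 2 * c₂ * m + c₁) = 0) ↔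
      (c₃ = 0 ∧ c₂ = 0 ∧ c₁ = 0)) := by
  refine ⟨fun p hp => ?_, ⟨fun ⟨κ₀, h⟩ => ?_, fun ⟨h3, h2⟩ => ⟨-c₁, fun m => by
    simp [h3, h2]⟩⟩, ⟨fun h => ?_, fun ⟨h3, h2, h1⟩ m => by simp [h3, h2, h1]⟩⟩
  · obtain ⟨hm, hQ, hP⟩ := hpos p hp
    exact gauss_aux a₀ a₁ c₀ c₁ c₂ c₃ p.1 p.2 hm hQ hP
  · have e0 := h 0; have e1 := h 1; have e2 := h (-1)
    constructor <;> nlinarith [e0, e1, e2]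
  · have e0 := h 0; have e1 := h 1; have e2 := h (-1)
    refine ⟨by nlinarith, by nlinarith, by nlinarith⟩
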